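/- arXiv:2402.19189 — 2 statements merged into one kernel-verified Lean document; each statement's English description precedes it below -/
import Mathlib

section
/- Let E ⊆ V × V be an edge set with probabilities p_e ∈ [0,1], and let u ∈ V be an isolated node, i.e., no edge of E is incident to u (neither starting nor ending at u). For any T ⊆ V ∖ {u}, let A_T = {⟨u, v⟩ : v ∈ T} be added edges each with probability 1. Then σ(A_T, {u}) = 1 + σ_E(T); consequently, choosing at most k added edges from {⟨u, v⟩ : v ∈ V ∖ {u}} to maximize σ(A, {u}) is equivalent to choosing a seed set T of at most k nodes to maximize σ_E(T). -/
open scoped Classical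

noncomputable section

/-- The set of nodes reachable from some node of `S` via edges of `g`
(every node reaches itself). -/
def Reach {V : Type*} (S : Finset V) (g : Finset (V × V)) : Set V :=
  {x | ∃ s ∈ S, Relation.ReflTransGen (fun a b => (a, b) ∈ g) s x}

/-- Probability of the live-edge graph `g ⊆ F`. -/
def liveProb {V : Type*} [DecidableEq V] (F : Finset (V × V)) (p : V × V → ℝ)
    (g : Finset (V × V)) : ℝ :=
  (∏ e ∈ g, p e) * ∏ e ∈ F \ g, (1 - p e)

/-- The expected spread of the seed set `S` over live-edge graphs of edge set `F`;
the augmented influence spread is `σ(A, S) = expSpread (E ∪ A) q S` where `q` carries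
the probabilities of both original and added edges. -/
def expSpread {V : Type*} [DecidableEq V] (F : Finset (V × V)) (p : V × V → ℝ)
    (S : Finset V) : ℝ :=
  ∑ g ∈ F.powerset, liveProb F p g * ((Reach S g).ncard : ℝ)

section Aux

set_option linter.unusedSectionVars false

variable {V : Type*} [Fintype V] [DecidableEq V]

lemma sum_liveProb (F : Finset (V × V)) (p : V × V → ℝ) :
    ∑ g ∈ F.powerset, liveProb F p g = 1 := by
  unfold liveProb
  rw [← Finset.prod_add]
  simp

lemma reach_ne_u (E : Finset (V × V)) (u : V) (hu : ∀ e ∈ E, e.1 ≠ u ∧ e.2 ≠ u)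
    (T : Finset V) (hT : u ∉ T) (g : Finset (V × V)) (hg : g ⊆ E)
    {x : V} (hx : x ∈ Reach T g) : x ≠ u := by
  obtain ⟨s, hs, hpath⟩ := hx
  induction hpath with
  | refl => exact fun h => hT (h ▸ hs)
  | tail _ h ih => exact (hu _ (hg h)).2

lemma reach_union (E : Finset (V × V)) (u : V) (hu : ∀ e ∈ E, e.1 ≠ u ∧ e.2 ≠ u)
    (T : Finset V) (hT : u ∉ T) (g : Finset (V × V)) (hg : g ⊆ E) :
    Reach {u} (g ∪ T.image (fun v => (u, v))) = insert u (Reach T g) := by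
  ext x
  simp only [Set.mem_insert_iff]
  constructor
  · rintro ⟨s, hs, hpath⟩
    simp only [Finset.mem_singleton] at hs
    subst hs
    induction hpath with
    | refl => exact Or.inl rfl
    | @tail b c _ h ih =>
      rcases Finset.mem_union.mp h with h' | h'
      · rcases ih with rfl | hb
        · exact absurd rfl (hu _ (hg h')).1
        · obtain ⟨t, ht, hp⟩ := hb
          exact Or.inr ⟨t, ht, hp.tail h'⟩
      · simp only [Finset.mem_image] at h'
        obtain ⟨v, hv, heq⟩ := h'
        simp only [Prod.mk.injEq] at heq
        obtain ⟨rfl, rfl⟩ := heq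
        exact Or.inr ⟨_, hv, Relation.ReflTransGen.refl⟩
  · rintro (rfl | ⟨t, ht, hp⟩)
    · exact ⟨x, Finset.mem_singleton_self x, Relation.ReflTransGen.refl⟩
    · refine ⟨u, Finset.mem_singleton_self u, Relation.ReflTransGen.head (b := t) ?_ ?_⟩
      · exact Finset.mem_union_right _ (Finset.mem_image.mpr ⟨t, ht, rfl⟩)
      · exact Relation.ReflTransGen.mono (fun a b hab => Finset.mem_union_left _ hab) _ _ hp

lemma main_eq (E : Finset (V × V)) (p : V × V → ℝ) (u : V)
    (hu : ∀ e ∈ E, e.1 ≠ u ∧ e.2 ≠ u) (T : Finset V) (hT : u ∉ T) :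
    expSpread (E ∪ T.image (fun v => (u, v)))
        (fun e => if e.1 = u then 1 else p e) {u}
      = 1 + expSpread E p T := by
  set q : V × V → ℝ := fun e => if e.1 = u then 1 else p e with hq
  set A : Finset (V × V) := T.image (fun v => (u, v)) with hA
  have hAu : ∀ e ∈ A, e.1 = u := by
    intro e he
    rw [hA, Finset.mem_image] at he
    obtain ⟨v, hv, rfl⟩ := he
    rfl
  have hdisj : Disjoint E A := by
    rw [Finset.disjoint_left]
    intro e he hea
    exact (hu e he).1 (hAu e hea)
  have hzero : ∀ h ∈ (E ∪ A).powerset,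
      liveProb (E ∪ A) q h * ((Reach {u} h).ncard : ℝ) ≠ 0 → A ⊆ h := by
    intro h _ hne
    by_contra hns
    obtain ⟨e, heA, heh⟩ := Finset.not_subset.mp hns
    apply hne
    have : liveProb (E ∪ A) q h = 0 := by
      unfold liveProb
      have he' : e ∈ (E ∪ A) \ h :=
        Finset.mem_sdiff.mpr ⟨Finset.mem_union_right _ heA, heh⟩
      rw [Finset.prod_eq_zero he' (by simp [hq, hAu e heA])]
      ring
    rw [this, zero_mul]
  have hlp : ∀ g ∈ E.powerset, liveProb (E ∪ A) q (g ∪ A) = liveProb E p g := by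
    intro g hg
    rw [Finset.mem_powerset] at hg
    unfold liveProb
    have hdg : Disjoint g A := hdisj.mono_left hg
    have h1 : (E ∪ A) \ (g ∪ A) = E \ g := by
      ext e
      simp only [Finset.mem_sdiff, Finset.mem_union, not_or]
      constructor
      · rintro ⟨he, hg', hA'⟩
        exact ⟨he.resolve_right hA', hg'⟩
      · rintro ⟨he, hg'⟩
        exact ⟨Or.inl he, hg', fun hA' => Finset.disjoint_left.mp hdisj he hA'⟩
    rw [h1, Finset.prod_union hdg]
    have h2 : ∏ e ∈ A, q e = 1 :=
      Finset.prod_eq_one fun e he => by simp [hq, hAu e he]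
    have h3 : ∏ e ∈ g, q e = ∏ e ∈ g, p e :=
      Finset.prod_congr rfl fun e he => by simp [hq, (hu e (hg he)).1]
    have h4 : ∏ e ∈ E \ g, (1 - q e) = ∏ e ∈ E \ g, (1 - p e) :=
      Finset.prod_congr rfl fun e he => by
        simp [hq, (hu e (Finset.mem_sdiff.mp he).1).1]
    rw [h2, h3, h4, mul_one]
  have hnc : ∀ g ∈ E.powerset,
      ((Reach {u} (g ∪ A)).ncard : ℝ) = 1 + ((Reach T g).ncard : ℝ) := by
    intro g hg
    rw [Finset.mem_powerset] at hg
    rw [hA, reach_union E u hu T hT g hg,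
      Set.ncard_insert_of_notMem (fun hx => reach_ne_u E u hu T hT g hg hx rfl)
        (Set.toFinite _)]
    push_cast
    ring
  rw [expSpread, ← Finset.sum_filter_of_ne hzero]
  have key : ∑ h ∈ (E ∪ A).powerset.filter (fun h => A ⊆ h),
      liveProb (E ∪ A) q h * ((Reach {u} h).ncard : ℝ)
      = ∑ g ∈ E.powerset, liveProb E p g * (1 + ((Reach T g).ncard : ℝ)) := by
    refine Finset.sum_bij' (fun h _ => h \ A) (fun g _ => g ∪ A) ?_ ?_ ?_ ?_ ?_
    · intro h hh
      rw [Finset.mem_filter, Finset.mem_powerset] at hh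
      rw [Finset.mem_powerset]
      intro e he
      rcases Finset.mem_union.mp (hh.1 (Finset.mem_sdiff.mp he).1) with h' | h'
      · exact h'
      · exact absurd h' (Finset.mem_sdiff.mp he).2
    · intro g hg
      rw [Finset.mem_powerset] at hg
      rw [Finset.mem_filter, Finset.mem_powerset]
      exact ⟨Finset.union_subset_union_left hg, Finset.subset_union_right⟩
    · intro h hh
      rw [Finset.mem_filter] at hh
      exact Finset.sdiff_union_of_subset hh.2
    · intro g hg
      rw [Finset.mem_powerset] at hg
      exact Finset.union_sdiff_cancel_right (hdisj.mono_left hg)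
    · intro h hh
      rw [Finset.mem_filter, Finset.mem_powerset] at hh
      have hsub : h \ A ∈ E.powerset := by
        rw [Finset.mem_powerset]
        intro e he
        rcases Finset.mem_union.mp (hh.1 (Finset.mem_sdiff.mp he).1) with h' | h'
        · exact h'
        · exact absurd h' (Finset.mem_sdiff.mp he).2
      have hh' : h \ A ∪ A = h := Finset.sdiff_union_of_subset hh.2
      rw [← hlp _ hsub, ← hnc _ hsub, hh']
  rw [key]
  have : ∀ g ∈ E.powerset,
      liveProb E p g * (1 + ((Reach T g).ncard : ℝ))
        = liveProb E p g + liveProb E p g * ((Reach T g).ncard : ℝ) := by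
    intro g _; ring
  rw [Finset.sum_congr rfl this, Finset.sum_add_distrib, sum_liveProb, expSpread]

end Aux

/-- Let `u` be an isolated node of `(V, E)`. For `T ⊆ V ∖ {u}`, adding the edges
`A_T = {⟨u,v⟩ : v ∈ T}`, each with probability `1`, gives `σ(A_T, {u}) = 1 + σ_E(T)`;
consequently, choosing at most `k` added edges from `{⟨u,v⟩ : v ∈ V ∖ {u}}` to maximize
`σ(A, {u})` is equivalent to choosing a seed set `T` of at most `k` nodes to maximize
`σ_E(T)`. -/
theorem isolated_seed_reduction {V : Type*} [Fintype V] [DecidableEq V]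
    (E : Finset (V × V)) (p : V × V → ℝ)
    (hp : ∀ e, 0 ≤ p e ∧ p e ≤ 1)
    (u : V) (hu : ∀ e ∈ E, e.1 ≠ u ∧ e.2 ≠ u)
    (T : Finset V) (hT : u ∉ T) :
    expSpread (E ∪ T.image (fun v => (u, v)))
        (fun e => if e.1 = u then 1 else p e) {u}
      = 1 + expSpread E p T
    ∧ ∀ k : ℕ, T.card ≤ k →
      ((∀ T' : Finset V, u ∉ T' → T'.card ≤ k → expSpread E p T' ≤ expSpread E p T) ↔
        (∀ A : Finset (V × V),
          A ⊆ (Finset.univ.erase u).image (fun v => (u, v)) → A.card ≤ k →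
          expSpread (E ∪ A) (fun e => if e.1 = u then 1 else p e) {u} ≤
            expSpread (E ∪ T.image (fun v => (u, v)))
              (fun e => if e.1 = u then 1 else p e) {u})) := by
  refine ⟨main_eq E p u hu T hT, ?_⟩
  intro k hk
  constructor
  · intro hopt A hA hAk
    -- A = T'.image (u, ·) with T' = A.image Prod.snd
    set T' : Finset V := A.image Prod.snd with hT'
    have huT' : u ∉ T' := by
      rw [hT', Finset.mem_image]
      rintro ⟨e, heA, he2⟩
      have := hA heA
      rw [Finset.mem_image] at this
      obtain ⟨v, hv, rfl⟩ := this
      exact (Finset.mem_erase.mp hv).1 (he2 ▸ rfl)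
    have hAeq : A = T'.image (fun v => (u, v)) := by
      ext e
      simp only [hT', Finset.mem_image]
      constructor
      · intro he
        obtain ⟨v, _, rfl⟩ := Finset.mem_image.mp (hA he)
        exact ⟨v, ⟨(u, v), he, rfl⟩, rfl⟩
      · rintro ⟨v, ⟨e', he', rfl⟩, rfl⟩
        obtain ⟨w, _, rfl⟩ := Finset.mem_image.mp (hA he')
        exact he'
    have hT'k : T'.card ≤ k := le_trans (Finset.card_image_le) hAk
    rw [hAeq, main_eq E p u hu T' huT', main_eq E p u hu T hT]
    linarith [hopt T' huT' hT'k]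
  · intro hopt T' huT' hT'k
    set A : Finset (V × V) := T'.image (fun v => (u, v)) with hA
    have hsub : A ⊆ (Finset.univ.erase u).image (fun v => (u, v)) := by
      rw [hA]
      apply Finset.image_subset_image
      intro v hv
      exact Finset.mem_erase.mpr ⟨fun h => huT' (h ▸ hv), Finset.mem_univ v⟩
    have hcard : A.card ≤ k := by
      rw [hA, Finset.card_image_of_injective _ (fun a b hab => (Prod.mk.injEq _ _ _ _ ▸ hab).2)]
      exact hT'k
    have := hopt A hsub hcard
    rw [hA, main_eq E p u hu T' huT', main_eq E p u hu T hT] at this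
    linarith
end
end

section
/- Fix a seed set S ⊆ V, a set A of added edges disjoint from E, a candidate edge e = ⟨u, v⟩ ∉ E ∪ A with u ∈ S and probability p_{u,v} ∈ [0,1], and λ ∈ [0,1]. Suppose σ̂_1 and σ̂_2 are real numbers satisfying (1 − λ) σ(A, S ∪ {v}) ≤ σ̂_1 ≤ (1 + λ) σ(A, S ∪ {v}) and (1 − λ) σ(A, S) ≤ σ̂_2 ≤ (1 + λ) σ(A, S). Then σ̂ = p_{u,v} σ̂_1 + (1 − p_{u,v}) σ̂_2 satisfies (1 − λ) σ(A ∪ {e}, S) ≤ σ̂ ≤ (1 + λ) σ(A ∪ {e}, S); i.e., σ̂ is a multiplicative λ-error estimate of the augmented influence spread σ(A ∪ {e}, S). -/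
open scoped Classical

noncomputable section

lemma reach_insert_edge {V : Type*} [DecidableEq V] (S : Finset V) (u v : V) (hu : u ∈ S)
    (g : Finset (V × V)) :
    Reach S (insert (u, v) g) = Reach (insert v S) g := by
  ext x
  constructor
  · rintro ⟨s, hs, hpath⟩
    induction hpath with
    | refl => exact ⟨s, Finset.mem_insert_of_mem hs, Relation.ReflTransGen.refl⟩
    | tail hab hbc ih =>
      rcases Finset.mem_insert.1 hbc with h | h
      · obtain ⟨-, h2⟩ := Prod.ext_iff.1 h
        subst h2
        exact ⟨_, Finset.mem_insert_self _ _, Relation.ReflTransGen.refl⟩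
      · obtain ⟨t, ht, htb⟩ := ih
        exact ⟨t, ht, htb.tail h⟩
  · rintro ⟨s, hs, hpath⟩
    have lift : ∀ a b : V, Relation.ReflTransGen (fun a b => (a, b) ∈ g) a b →
        Relation.ReflTransGen (fun a b => (a, b) ∈ insert ((u, v) : V × V) g) a b := by
      intro a b h
      exact Relation.ReflTransGen.mono (fun x y hxy => Finset.mem_insert_of_mem hxy) a b h
    rcases Finset.mem_insert.1 hs with rfl | hs
    · exact ⟨u, hu, (Relation.ReflTransGen.single (Finset.mem_insert_self _ _)).trans (lift _ _ hpath)⟩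
    · exact ⟨s, hs, lift _ _ hpath⟩

lemma expSpread_insert {V : Type*} [Fintype V] [DecidableEq V]
    (F : Finset (V × V)) (p : V × V → ℝ) (S : Finset V) (u v : V)
    (hu : u ∈ S) (he : (u, v) ∉ F) :
    expSpread (insert (u, v) F) p S
      = p (u, v) * expSpread F p (insert v S) + (1 - p (u, v)) * expSpread F p S := by
  unfold expSpread
  rw [Finset.sum_powerset_insert he]
  have h1 : ∀ g ∈ F.powerset, liveProb (insert (u,v) F) p g * ((Reach S g).ncard : ℝ)
      = (1 - p (u,v)) * (liveProb F p g * ((Reach S g).ncard : ℝ)) := by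
    intro g hg
    have hgF : g ⊆ F := Finset.mem_powerset.1 hg
    have heg : (u,v) ∉ g := fun h => he (hgF h)
    have : insert (u,v) F \ g = insert (u,v) (F \ g) :=
      Finset.insert_sdiff_of_notMem _ heg
    unfold liveProb
    rw [this, Finset.prod_insert (by simp [he])]
    ring
  have h2 : ∀ g ∈ F.powerset,
      liveProb (insert (u,v) F) p (insert (u,v) g) * ((Reach S (insert (u,v) g)).ncard : ℝ)
      = p (u,v) * (liveProb F p g * ((Reach (insert v S) g).ncard : ℝ)) := by
    intro g hg
    have hgF : g ⊆ F := Finset.mem_powerset.1 hg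
    have heg : (u,v) ∉ g := fun h => he (hgF h)
    have hsd : insert (u,v) F \ insert (u,v) g = F \ g := by
      ext x
      simp only [Finset.mem_sdiff, Finset.mem_insert]
      constructor
      · rintro ⟨h | h, h2⟩
        · exact (h2 (Or.inl h)).elim
        · exact ⟨h, fun hx => h2 (Or.inr hx)⟩
      · rintro ⟨h, h2⟩
        exact ⟨Or.inr h, fun hx => (hx.elim (fun hh => he (hh ▸ h)) h2)⟩
    unfold liveProb
    rw [hsd, Finset.prod_insert heg, reach_insert_edge S u v hu g]
    ring
  rw [Finset.sum_congr rfl h1, Finset.sum_congr rfl h2, ← Finset.mul_sum, ← Finset.mul_sum]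
  ring

/-- If `σ̂₁` and `σ̂₂` are multiplicative `λ`-error estimates of `σ(A, S ∪ {v})` and
`σ(A, S)` respectively, then `σ̂ = p_{u,v} σ̂₁ + (1 − p_{u,v}) σ̂₂` is a multiplicative
`λ`-error estimate of the augmented influence spread `σ(A ∪ {e}, S)`, where
`e = ⟨u,v⟩ ∉ E ∪ A` and `u ∈ S`. -/
theorem combined_estimate_error {V : Type*} [Fintype V] [DecidableEq V]
    (E A : Finset (V × V)) (p : V × V → ℝ)
    (hp : ∀ e, 0 ≤ p e ∧ p e ≤ 1)
    (hEA : Disjoint E A)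
    (S : Finset V) (u v : V) (hu : u ∈ S) (he : (u, v) ∉ E ∪ A)
    (lam : ℝ) (hlam0 : 0 ≤ lam) (hlam1 : lam ≤ 1)
    (s1 s2 : ℝ)
    (h1l : (1 - lam) * expSpread (E ∪ A) p (insert v S) ≤ s1)
    (h1u : s1 ≤ (1 + lam) * expSpread (E ∪ A) p (insert v S))
    (h2l : (1 - lam) * expSpread (E ∪ A) p S ≤ s2)
    (h2u : s2 ≤ (1 + lam) * expSpread (E ∪ A) p S) :
    (1 - lam) * expSpread (E ∪ (A ∪ {(u, v)})) p S ≤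
        p (u, v) * s1 + (1 - p (u, v)) * s2 ∧
      p (u, v) * s1 + (1 - p (u, v)) * s2 ≤
        (1 + lam) * expSpread (E ∪ (A ∪ {(u, v)})) p S := by
  have hrw : E ∪ (A ∪ {(u, v)}) = insert (u, v) (E ∪ A) := by
    ext x; simp [Finset.mem_union, Finset.mem_insert, or_comm, or_assoc, or_left_comm]
  have key := expSpread_insert (E ∪ A) p S u v hu he
  rw [hrw, key]
  obtain ⟨hq0, hq1⟩ := hp (u, v)
  set q := p (u, v)
  set σ1 := expSpread (E ∪ A) p (insert v S)
  set σ2 := expSpread (E ∪ A) p S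
  have t1 := mul_le_mul_of_nonneg_left h1l hq0
  have t2 := mul_le_mul_of_nonneg_left h1u hq0
  have t3 := mul_le_mul_of_nonneg_left h2l (by linarith : (0:ℝ) ≤ 1 - q)
  have t4 := mul_le_mul_of_nonneg_left h2u (by linarith : (0:ℝ) ≤ 1 - q)
  constructor <;> nlinarith [t1, t2, t3, t4]
end
end
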